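/- Let (Ω,𝒜,μ) be a probability space, T:Ω→Ω measure preserving, χ:Ω→[0,∞) measurable with μ(χ>x)=L(x)/x^α for all x>0, L slowly varying, 0<α<1; let (b_n) be natural numbers tending to infinity with b_n=o(n); put ζ_n := b_n^{2/3}, g_n := F^←(1−(b_n−ζ_n)/n). Assume the ψ-mixing coefficients of (χ∘T^{n-1}) satisfy ψ(r)<1 for some r∈ℕ, and let r := min{n∈ℕ : ψ(n)<1}. Then there exists N∈ℕ such that for all n≥N and all k≥1: ∫ T_n^{2^k·g_n}χ · 1_{Φ_{k,n}} dμ ≤ ((1+ψ(r))²/(1−ψ(r))) · (∫ T_n^{2^k·g_n}χ dμ) · μ(Φ'_{k,n}), where Φ_{k,n} := { T_n^{2^{k-1}·g_n}χ < S_n^{b_n}χ } and Φ'_{k,n} := { #{ j≤n : χ∘T^{j-1} > 2^{k-1}·g_n } > b_n − 2r + 1 }. -/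

import Mathlib

open MeasureTheory Filter Topology ENNReal

noncomputable section

/-- Birkhoff sum `S_n χ = ∑_{k=1}^n χ ∘ T^{k-1}`. -/
def birkhoffSumN {Ω : Type*} (T : Ω → Ω) (χ : Ω → ℝ) (n : ℕ) (ω : Ω) : ℝ :=
  ∑ k ∈ Finset.range n, χ (T^[k] ω)

/-- Trimmed sum `S_n^b χ`: the sum of the `n - b` smallest values among
`χ(ω), χ(Tω), …, χ(T^{n-1}ω)`. -/
def trimmedSumN {Ω : Type*} (T : Ω → Ω) (χ : Ω → ℝ) (n b : ℕ) (ω : Ω) : ℝ :=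
  (((((List.range n).map fun k => χ (T^[k] ω))).mergeSort (fun a b => a ≤ b)).take (n - b)).sum

/-- Truncated sum `T_n^f χ = ∑_{k=1}^n (χ·1_{χ ≤ f}) ∘ T^{k-1}`. -/
def truncSumN {Ω : Type*} (T : Ω → Ω) (χ : Ω → ℝ) (n : ℕ) (f : ℝ) (ω : Ω) : ℝ :=
  ∑ k ∈ Finset.range n, if χ (T^[k] ω) ≤ f then χ (T^[k] ω) else 0

/-- A function `L` is slowly varying if `L(cx)/L(x) → 1` as `x → ∞`, for every `c > 0`. -/
def SlowlyVarying (L : ℝ → ℝ) : Prop :=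
  ∀ c : ℝ, 0 < c → Tendsto (fun x => L (c * x) / L x) atTop (𝓝 1)

/-- `ls` is a de Bruijn conjugate of the slowly varying function `Lt`. -/
def IsDeBruijnConjugate (Lt ls : ℝ → ℝ) : Prop :=
  SlowlyVarying ls ∧
  Tendsto (fun x => Lt x * ls (x * Lt x)) atTop (𝓝 1) ∧
  Tendsto (fun x => ls x * Lt (x * ls x)) atTop (𝓝 1)

/-- The measure of dependence `ψ(ℬ,𝒞)` between two sub-σ-fields. -/
def psiDep {Ω : Type*} [MeasurableSpace Ω] (μ : Measure Ω)
    (B C : MeasurableSpace Ω) : ℝ≥0∞ :=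
  ⨆ (b : Set Ω) (c : Set Ω) (_ : MeasurableSet[B] b) (_ : MeasurableSet[C] c)
    (_ : 0 < μ b) (_ : 0 < μ c),
    ENNReal.ofReal |(μ (b ∩ c)).toReal / ((μ b).toReal * (μ c).toReal) - 1|

/-- The σ-field generated by `X_k = χ ∘ T^{k-1}` for `J ≤ k ≤ L`. -/
def sigmaIcc {Ω : Type*} [MeasurableSpace Ω] (T : Ω → Ω) (χ : Ω → ℝ) (J L : ℕ) :
    MeasurableSpace Ω :=
  ⨆ k ∈ Set.Icc J L, MeasurableSpace.comap (fun ω => χ (T^[k - 1] ω)) inferInstance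

/-- The σ-field generated by `X_k = χ ∘ T^{k-1}` for `k ≥ J`. -/
def sigmaIci {Ω : Type*} [MeasurableSpace Ω] (T : Ω → Ω) (χ : Ω → ℝ) (J : ℕ) :
    MeasurableSpace Ω :=
  ⨆ k ∈ Set.Ici J, MeasurableSpace.comap (fun ω => χ (T^[k - 1] ω)) inferInstance

/-- The `n`-th ψ-mixing coefficient of the sequence `(χ ∘ T^{k-1})_{k ≥ 1}`. -/
def psiCoeff {Ω : Type*} [MeasurableSpace Ω] (μ : Measure Ω) (T : Ω → Ω) (χ : Ω → ℝ)
    (n : ℕ) : ℝ≥0∞ :=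
  ⨆ (k : ℕ) (_ : 1 ≤ k), psiDep μ (sigmaIcc T χ 1 k) (sigmaIci T χ (k + n))

/-- A bounded operator `U` has a spectral gap: `U = λ·P + N` with `P` a one-dimensional
projection, `ρ(N) < |λ|`, and `PN = NP = 0`. -/
def HasSpectralGap {F : Type*} [NormedAddCommGroup F] [NormedSpace ℝ F] [CompleteSpace F]
    (U : F →L[ℝ] F) : Prop :=
  ∃ (lam : ℝ) (P N : F →L[ℝ] F),
    U = lam • P + N ∧ P.comp P = P ∧
    Module.finrank ℝ (LinearMap.range (P : F →ₗ[ℝ] F)) = 1 ∧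
    spectralRadius ℝ N < ENNReal.ofReal |lam| ∧
    P.comp N = 0 ∧ N.comp P = 0

/-- Property ℭ: `μ` is a `T`-invariant mixing probability measure, `ℱ` (realized as a Banach
algebra `F` of measurable functions via the injective algebra homomorphism `ι`) contains the
constants, dominates the sup norm, and the transfer operator restricts to a bounded operator
on `F` with a spectral gap. -/
structure PropertyC {Ω : Type*} [MeasurableSpace Ω] (T : Ω → Ω) (μ : Measure Ω)
    {F : Type*} [NormedRing F] [NormedAlgebra ℝ F] [CompleteSpace F]
    (ι : F →ₐ[ℝ] Ω → ℝ) : Prop where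
  prob : IsProbabilityMeasure μ
  invariant : MeasurePreserving T μ μ
  mixing : ∀ A B : Set Ω, MeasurableSet A → MeasurableSet B →
    Tendsto (fun n => μ (A ∩ T^[n] ⁻¹' B)) atTop (𝓝 (μ A * μ B))
  inj : Function.Injective ι
  measurable_mem : ∀ f : F, Measurable (ι f)
  norm_ge_sup : ∀ (f : F) (ω : Ω), |ι f ω| ≤ ‖f‖
  transfer : ∃ That : F →L[ℝ] F,
    (∀ (f : F) (g : Ω → ℝ), Measurable g → (∃ C, ∀ ω, |g ω| ≤ C) →
      ∫ ω, ι (That f) ω * g ω ∂μ = ∫ ω, ι f ω * g (T ω) ∂μ) ∧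
    HasSpectralGap That

/-- Property 𝔇: Property ℭ together with the norm control on truncations of the
nonnegative observable `χ`. -/
structure PropertyD {Ω : Type*} [MeasurableSpace Ω] (T : Ω → Ω) (μ : Measure Ω)
    {F : Type*} [NormedRing F] [NormedAlgebra ℝ F] [CompleteSpace F]
    (ι : F →ₐ[ℝ] Ω → ℝ) (χ : Ω → ℝ) extends PropertyC T μ ι : Prop where
  chi_nonneg : ∀ ω, 0 ≤ χ ω
  chi_meas : Measurable χ
  norm_bound : ∃ K₁ > (0 : ℝ), ∀ ℓ : ℝ, 0 ≤ ℓ →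
    (∃ f : F, ι f = (fun ω => if χ ω ≤ ℓ then χ ω else 0) ∧ ‖f‖ ≤ K₁ * ℓ) ∧
    (∃ g : F, ι g = (fun ω => if ℓ < χ ω then (1 : ℝ) else 0) ∧ ‖g‖ ≤ K₁)

/-- The distribution function `F(x) = μ(χ ≤ x)`. -/
def distF {Ω : Type*} [MeasurableSpace Ω] (μ : Measure Ω) (χ : Ω → ℝ) (x : ℝ) : ℝ :=
  (μ {ω | χ ω ≤ x}).toReal

/-- Generalized inverse `F^←(y) = inf {x | F(x) ≥ y}`. -/
def genInv (F : ℝ → ℝ) (y : ℝ) : ℝ := sInf {x : ℝ | y ≤ F x}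

/-- `g_n = F^←(1 - (b_n - ζ_n)/n)` where `ζ_n = b_n^{2/3}`. -/
def gSeq {Ω : Type*} [MeasurableSpace Ω] (μ : Measure Ω) (χ : Ω → ℝ) (b : ℕ → ℕ)
    (n : ℕ) : ℝ :=
  genInv (distF μ χ) (1 - ((b n : ℝ) - (b n : ℝ) ^ ((2 : ℝ) / 3)) / n)

/-- The norming sequence `d_n = (α/(1-α))·n^{1/α}·b_n^{1-1/α}·ℓ^#((n/b_n)^{1/α})`. -/
def dSeq (α : ℝ) (ls : ℝ → ℝ) (b : ℕ → ℕ) (n : ℕ) : ℝ :=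
  α / (1 - α) * (n : ℝ) ^ (1 / α) * (b n : ℝ) ^ (1 - 1 / α) *
    ls (((n : ℝ) / (b n : ℝ)) ^ (1 / α))

end

-- auxiliary lemmas (developed separately; preamble prepended)
section Aux

lemma take_le_of_sorted {ℓ : ℝ} :
    ∀ (l : List ℝ), List.Pairwise (fun a b : ℝ => a ≤ b) l →
    ∀ m : ℕ, m + l.countP (fun x => decide (ℓ < x)) ≤ l.length →
    ∀ x ∈ l.take m, x ≤ ℓ := by
  intro l
  induction l with
  | nil => intro _ m _ x hx; simp at hx
  | cons a t ih =>
    intro hs m hm x hx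
    match m with
    | 0 => simp at hx
    | Nat.succ m =>
      rw [List.take_succ_cons, List.mem_cons] at hx
      rcases hx with rfl | hx
      · by_contra h
        push_neg at h
        have hall : ∀ y ∈ x :: t, ℓ < y := by
          intro y hy
          rcases List.mem_cons.mp hy with rfl | hy
          · exact h
          · exact lt_of_lt_of_le h ((List.pairwise_cons.mp hs).1 y hy)
        have hcnt : (x :: t).countP (fun z => decide (ℓ < z)) = (x :: t).length :=
          List.countP_eq_length.mpr (fun y hy => decide_eq_true (hall y hy))
        simp only [List.length_cons] at hm hcnt
        omega
      · refine ih (List.pairwise_cons.mp hs).2 m ?_ x hx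
        have h1 := List.countP_cons (p := fun x => decide (ℓ < x)) (a := a) (l := t)
        simp only [List.length_cons] at hm
        omega

lemma sum_map_ite_eq_sum_filter (ℓ : ℝ) :
    ∀ l : List ℝ, (l.map (fun x => if x ≤ ℓ then x else 0)).sum
      = (l.filter (fun x => decide (x ≤ ℓ))).sum := by
  intro l
  induction l with
  | nil => simp
  | cons a t ih =>
    by_cases h : a ≤ ℓ <;> simp [List.filter_cons, h, ih]

lemma finset_sum_range_eq_list (F : ℕ → ℝ) (n : ℕ) :
    ∑ k ∈ Finset.range n, F k = ((List.range n).map F).sum := by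
  induction n with
  | zero => simp
  | succ n ih => simp [Finset.sum_range_succ, List.range_succ, ih]

lemma trimmed_le_trunc {Ω : Type*} (T : Ω → Ω) (χ : Ω → ℝ) (hχ0 : ∀ ω, 0 ≤ χ ω)
    (n bb : ℕ) (ℓ : ℝ) (ω : Ω)
    (hcount : (((List.range n).map fun k => χ (T^[k] ω)).countP
      (fun x => decide (ℓ < x))) ≤ bb) :
    trimmedSumN T χ n bb ω ≤ truncSumN T χ n ℓ ω := by
  classical
  set l := (List.range n).map fun k => χ (T^[k] ω) with hl
  have hlen : l.length = n := by simp [hl]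
  have hnn : ∀ x ∈ l, 0 ≤ x := by
    intro x hx; rcases List.mem_map.mp hx with ⟨k, _, rfl⟩; exact hχ0 _
  set s := l.mergeSort (fun a b => a ≤ b) with hs
  have hperm : s.Perm l := List.mergeSort_perm l _
  have hsorted : List.Pairwise (fun a b : ℝ => a ≤ b) s := by
    have h := List.pairwise_mergeSort (le := fun a b : ℝ => decide (a ≤ b))
      (fun a b c hab hbc => decide_eq_true
        (le_trans (of_decide_eq_true hab) (of_decide_eq_true hbc)))
      (fun a b => by simpa using le_total a b) l
    exact h.imp (fun h' => of_decide_eq_true h')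
  have htake : ∀ x ∈ s.take (n - bb), x ≤ ℓ := by
    apply take_le_of_sorted s hsorted
    have h1 : s.countP (fun x => decide (ℓ < x)) = l.countP (fun x => decide (ℓ < x)) :=
      hperm.countP_eq _
    have h2 : s.length = n := hperm.length_eq.trans hlen
    have h3 := List.countP_le_length (p := fun x => decide (ℓ < x)) (l := s)
    omega
  have hfself : (s.take (n - bb)).filter (fun x => decide (x ≤ ℓ)) = s.take (n - bb) :=
    List.filter_eq_self.mpr (fun a ha => decide_eq_true (htake a ha))
  have h4 : (s.take (n - bb)).sum ≤ (s.filter (fun x => decide (x ≤ ℓ))).sum := by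
    rw [← hfself]
    refine List.Sublist.sum_le_sum (List.Sublist.filter _ (List.take_sublist _ _)) ?_
    intro x hx
    exact hnn x (hperm.mem_iff.mp (List.mem_of_mem_filter hx))
  have h5 : (s.filter (fun x => decide (x ≤ ℓ))).sum
      = (l.filter (fun x => decide (x ≤ ℓ))).sum := (hperm.filter _).sum_eq
  have h6 : truncSumN T χ n ℓ ω = (l.filter (fun x => decide (x ≤ ℓ))).sum := by
    rw [truncSumN, finset_sum_range_eq_list, ← sum_map_ite_eq_sum_filter, hl, List.map_map]
    rfl
  rw [h6]
  calc trimmedSumN T χ n bb ω = (s.take (n - bb)).sum := rfl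
  _ ≤ _ := h4.trans (le_of_eq h5)

lemma countP_range_eq_card (p : ℕ → Prop) [DecidablePred p] (n : ℕ) :
    (List.range n).countP (fun k => decide (p k)) = ((Finset.range n).filter p).card := by
  induction n with
  | zero => simp
  | succ n ih =>
    rw [List.range_succ, List.countP_append, Finset.range_add_one, Finset.filter_insert]
    by_cases h : p n
    · rw [if_pos h, Finset.card_insert_of_notMem
        (fun hc => Finset.notMem_range_self (Finset.mem_filter.mp hc).1)]
      simp [h, ih]
    · simp [h, ih]

lemma card_filter_range_eq_Icc (q : ℕ → Prop) [DecidablePred q] (n : ℕ) :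
    ((Finset.range n).filter (fun k => q (k + 1))).card
      = ((Finset.Icc 1 n).filter (fun j => q j)).card := by
  refine Finset.card_bij' (fun k _ => k + 1) (fun j _ => j - 1) ?_ ?_ ?_ ?_
  · intro k hk
    simp only [Finset.mem_filter, Finset.mem_range] at hk
    simp only [Finset.mem_filter, Finset.mem_Icc]
    exact ⟨⟨by omega, by omega⟩, hk.2⟩
  · intro j hj
    simp only [Finset.mem_filter, Finset.mem_Icc] at hj
    simp only [Finset.mem_filter, Finset.mem_range]
    have : j - 1 + 1 = j := by omega
    exact ⟨by omega, by rw [this]; exact hj.2⟩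
  · intro k hk; simp
  · intro j hj
    simp only [Finset.mem_filter, Finset.mem_Icc] at hj
    omega

end Aux
section Mix

variable {Ω : Type*} [MeasurableSpace Ω]

lemma measurable_sigmaIcc (T : Ω → Ω) (χ : Ω → ℝ) {J L k : ℕ} (hk : k ∈ Set.Icc J L) :
    @Measurable Ω ℝ (sigmaIcc T χ J L) _ (fun ω => χ (T^[k - 1] ω)) := by
  rw [measurable_iff_comap_le]
  exact le_iSup₂ (f := fun k (_ : k ∈ Set.Icc J L) =>
    MeasurableSpace.comap (fun ω => χ (T^[k - 1] ω)) inferInstance) k hk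

lemma measurable_sigmaIci (T : Ω → Ω) (χ : Ω → ℝ) {J k : ℕ} (hk : k ∈ Set.Ici J) :
    @Measurable Ω ℝ (sigmaIci T χ J) _ (fun ω => χ (T^[k - 1] ω)) := by
  rw [measurable_iff_comap_le]
  exact le_iSup₂ (f := fun k (_ : k ∈ Set.Ici J) =>
    MeasurableSpace.comap (fun ω => χ (T^[k - 1] ω)) inferInstance) k hk

lemma sigmaIcc_le {T : Ω → Ω} {χ : Ω → ℝ}
    (h : ∀ k : ℕ, Measurable fun ω => χ (T^[k] ω)) (J L : ℕ) :
    sigmaIcc T χ J L ≤ ‹MeasurableSpace Ω› :=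
  iSup₂_le fun k _ => measurable_iff_comap_le.mp (h (k - 1))

lemma sigmaIci_le {T : Ω → Ω} {χ : Ω → ℝ}
    (h : ∀ k : ℕ, Measurable fun ω => χ (T^[k] ω)) (J : ℕ) :
    sigmaIci T χ J ≤ ‹MeasurableSpace Ω› :=
  iSup₂_le fun k _ => measurable_iff_comap_le.mp (h (k - 1))

lemma measurable_cnt {m : MeasurableSpace Ω} (T : Ω → Ω) (χ : Ω → ℝ)
    (S : Finset ℕ) (ℓ : ℝ)
    (h : ∀ j ∈ S, @Measurable Ω ℝ m _ (fun ω => χ (T^[j - 1] ω))) :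
    @Measurable Ω ℕ m _ (fun ω => ((S.filter fun j => ℓ < χ (T^[j - 1] ω)).card)) := by
  classical
  have heq : (fun ω => ((S.filter fun j => ℓ < χ (T^[j - 1] ω)).card))
      = fun ω => ∑ j ∈ S, if ℓ < χ (T^[j - 1] ω) then 1 else 0 := by
    funext ω; exact Finset.card_filter _ _
  rw [heq]
  exact Finset.measurable_sum S (fun j hj =>
    Measurable.ite (measurableSet_lt measurable_const (h j hj))
      measurable_const measurable_const)

lemma psi_bound (μ : Measure Ω) [IsProbabilityMeasure μ]
    (T : Ω → Ω) (χ : Ω → ℝ) (r : ℕ) (hψ : psiCoeff μ T χ r < 1)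
    {k : ℕ} (hk : 1 ≤ k) {B C : Set Ω}
    (hB : MeasurableSet[sigmaIcc T χ 1 k] B) (hC : MeasurableSet[sigmaIci T χ (k + r)] C) :
    (μ (B ∩ C)).toReal ≤ (1 + (psiCoeff μ T χ r).toReal) * ((μ B).toReal * (μ C).toReal) ∧
    (1 - (psiCoeff μ T χ r).toReal) * ((μ B).toReal * (μ C).toReal) ≤ (μ (B ∩ C)).toReal := by
  set ψ := (psiCoeff μ T χ r).toReal with hψdef
  have hψ0 : (0 : ℝ) ≤ ψ := ENNReal.toReal_nonneg
  rcases eq_or_ne (μ B) 0 with h0 | h0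
  · have hBC : μ (B ∩ C) = 0 := measure_mono_null Set.inter_subset_left h0
    simp [hBC, h0]
  rcases eq_or_ne (μ C) 0 with h1 | h1
  · have hBC : μ (B ∩ C) = 0 := measure_mono_null Set.inter_subset_right h1
    simp [hBC, h1]
  have hBpos : 0 < μ B := pos_iff_ne_zero.mpr h0
  have hCpos : 0 < μ C := pos_iff_ne_zero.mpr h1
  have hBtr : (0 : ℝ) < (μ B).toReal := ENNReal.toReal_pos h0 (measure_ne_top μ B)
  have hCtr : (0 : ℝ) < (μ C).toReal := ENNReal.toReal_pos h1 (measure_ne_top μ C)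
  have step1 : ENNReal.ofReal |((μ (B ∩ C)).toReal / ((μ B).toReal * (μ C).toReal)) - 1|
      ≤ psiDep μ (sigmaIcc T χ 1 k) (sigmaIci T χ (k + r)) := by
    refine le_iSup_of_le B (le_iSup_of_le C ?_)
    refine le_iSup_of_le hB (le_iSup_of_le hC ?_)
    exact le_iSup_of_le hBpos (le_iSup_of_le hCpos le_rfl)
  have step2 : psiDep μ (sigmaIcc T χ 1 k) (sigmaIci T χ (k + r)) ≤ psiCoeff μ T χ r :=
    le_iSup₂ (f := fun k (_ : 1 ≤ k) =>
      psiDep μ (sigmaIcc T χ 1 k) (sigmaIci T χ (k + r))) k hk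
  have hne : psiCoeff μ T χ r ≠ ⊤ := hψ.ne_top
  have habs : |((μ (B ∩ C)).toReal / ((μ B).toReal * (μ C).toReal)) - 1| ≤ ψ := by
    have h2 := ENNReal.toReal_mono hne (step1.trans step2)
    rwa [ENNReal.toReal_ofReal (abs_nonneg _)] at h2
  have hd : (0 : ℝ) < (μ B).toReal * (μ C).toReal := mul_pos hBtr hCtr
  obtain ⟨hlo, hhi⟩ := abs_le.mp habs
  constructor
  · have h2 : (μ (B ∩ C)).toReal / ((μ B).toReal * (μ C).toReal) ≤ 1 + ψ := by linarith
    rw [div_le_iff₀ hd] at h2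
    linarith
  · have h2 : 1 - ψ ≤ (μ (B ∩ C)).toReal / ((μ B).toReal * (μ C).toReal) := by linarith
    rw [le_div_iff₀ hd] at h2
    linarith

end Mix
theorem truncated_sum_on_Phi_bound
    {Ω : Type*} [MeasurableSpace Ω] (μ : Measure Ω) [IsProbabilityMeasure μ]
    (T : Ω → Ω) (hT : MeasurePreserving T μ μ)
    (χ : Ω → ℝ) (hχm : Measurable χ) (hχ0 : ∀ ω, 0 ≤ χ ω)
    (L : ℝ → ℝ) (hL : SlowlyVarying L) (hLpos : ∀ x : ℝ, 0 < x → 0 < L x)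
    {α : ℝ} (hα0 : 0 < α) (hα1 : α < 1)
    (htail : ∀ x : ℝ, 0 < x → (μ {ω | x < χ ω}).toReal = L x / x ^ α)
    (b : ℕ → ℕ) (hb : Tendsto b atTop atTop)
    (hbo : Tendsto (fun n => (b n : ℝ) / (n : ℝ)) atTop (𝓝 0))
    (r : ℕ) (hr1 : 1 ≤ r) (hrψ : psiCoeff μ T χ r < 1)
    (hrmin : ∀ m : ℕ, 1 ≤ m → m < r → 1 ≤ psiCoeff μ T χ m)
    :
    ∃ N : ℕ, ∀ n ≥ N, ∀ k : ℕ, 1 ≤ k →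
      (∫ ω in {ω | truncSumN T χ n (2 ^ (k - 1) * gSeq μ χ b n) ω <
          trimmedSumN T χ n (b n) ω},
        truncSumN T χ n (2 ^ k * gSeq μ χ b n) ω ∂μ) ≤
      (1 + (psiCoeff μ T χ r).toReal) ^ 2 / (1 - (psiCoeff μ T χ r).toReal) *
        (∫ ω, truncSumN T χ n (2 ^ k * gSeq μ χ b n) ω ∂μ) *
        (μ {ω | (b n : ℝ) - 2 * r + 1 <
          (((Finset.Icc 1 n).filter fun j =>
            2 ^ (k - 1) * gSeq μ χ b n < χ (T^[j - 1] ω)).card : ℝ)}).toReal := by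
  classical
  refine ⟨0, fun n _ k hk => ?_⟩
  set ψ := (psiCoeff μ T χ r).toReal with hψdef
  have hψ0 : (0 : ℝ) ≤ ψ := ENNReal.toReal_nonneg
  have hψ1 : ψ < 1 := by
    have h := (ENNReal.toReal_lt_toReal hrψ.ne_top (by simp)).mpr hrψ
    simpa using h
  have h1ψ : (0 : ℝ) < 1 - ψ := by linarith
  set Creal := (1 + ψ) ^ 2 / (1 - ψ) with hCrealdef
  have hC0 : (0 : ℝ) ≤ Creal := by positivity
  set ℓ := 2 ^ (k - 1) * gSeq μ χ b n with hℓdef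
  set M := 2 ^ k * gSeq μ χ b n with hMdef
  have hXm : ∀ j : ℕ, Measurable fun ω => χ (T^[j] ω) :=
    fun j => hχm.comp (hT.iterate j).measurable
  -- the truncated summand at coordinate p (using X_p = χ ∘ T^{p-1})
  set Y : ℕ → Ω → ℝ := fun p ω => if χ (T^[p - 1] ω) ≤ M then χ (T^[p - 1] ω) else 0
    with hYdef
  have hY0 : ∀ p ω, 0 ≤ Y p ω := by
    intro p ω; simp only [hYdef]; split
    · exact hχ0 _
    · exact le_rfl
  have hYm : ∀ p, Measurable (Y p) := fun p =>
    Measurable.ite (measurableSet_le (hXm (p - 1)) measurable_const)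
      (hXm (p - 1)) measurable_const
  have hYsub : ∀ (p : ℕ) (m' : MeasurableSpace Ω),
      @Measurable Ω ℝ m' _ (fun ω => χ (T^[p - 1] ω)) → @Measurable Ω ℝ m' _ (Y p) :=
    fun p m' h => Measurable.ite (measurableSet_le h measurable_const) h measurable_const
  -- events
  set Φ : Set Ω := {ω | truncSumN T χ n ℓ ω < trimmedSumN T χ n (b n) ω} with hΦdef
  set Φ' : Set Ω := {ω | (b n : ℝ) - 2 * r + 1 <
      (((Finset.Icc 1 n).filter fun j => ℓ < χ (T^[j - 1] ω)).card : ℝ)} with hΦ'def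
  set Ψ : Set Ω := {ω | b n <
      ((Finset.Icc 1 n).filter fun j => ℓ < χ (T^[j - 1] ω)).card} with hΨdef
  have hcntm : ∀ S : Finset ℕ,
      Measurable (fun ω => ((S.filter fun j => ℓ < χ (T^[j - 1] ω)).card)) :=
    fun S => measurable_cnt T χ S ℓ (fun j _ => hXm (j - 1))
  have hΨm : MeasurableSet Ψ := (hcntm (Finset.Icc 1 n)) MeasurableSet.of_discrete
  have hΦΨ : Φ ⊆ Ψ := by
    intro ω hω
    by_contra hcon
    simp only [hΨdef, Set.mem_setOf_eq, not_lt] at hcon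
    have hcnteq : (((List.range n).map fun k' => χ (T^[k'] ω)).countP
        (fun x => decide (ℓ < x)))
        = ((Finset.Icc 1 n).filter fun j => ℓ < χ (T^[j - 1] ω)).card := by
      rw [List.countP_map]
      have e1 : (List.range n).countP (fun k' => decide (ℓ < χ (T^[k'] ω)))
          = ((Finset.range n).filter (fun k' => ℓ < χ (T^[k'] ω))).card :=
        countP_range_eq_card _ n
      have e2 := card_filter_range_eq_Icc (fun j => ℓ < χ (T^[j - 1] ω)) n
      simp only [Nat.add_sub_cancel] at e2
      exact e1.trans e2
    have htr : trimmedSumN T χ n (b n) ω ≤ truncSumN T χ n ℓ ω :=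
      trimmed_le_trunc T χ hχ0 n (b n) ℓ ω (by rw [hcnteq]; exact hcon)
    exact absurd hω (by simp only [hΦdef, Set.mem_setOf_eq, not_lt]; exact htr)
  have hΨΦ' : Ψ ⊆ Φ' := by
    intro ω hω
    simp only [hΨdef, Set.mem_setOf_eq] at hω
    simp only [hΦ'def, Set.mem_setOf_eq]
    have h1 : ((b n : ℝ)) <
        (((Finset.Icc 1 n).filter fun j => ℓ < χ (T^[j - 1] ω)).card : ℝ) := by
      exact_mod_cast hω
    have h2 : (1 : ℝ) ≤ (r : ℝ) := by exact_mod_cast hr1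
    linarith
  -- the key pointwise decoupling estimate
  have key : ∀ p : ℕ, 1 ≤ p → p ≤ n → ∀ t : ℝ,
      μ ({ω | t < Y p ω} ∩ Ψ) ≤ ENNReal.ofReal Creal * μ {ω | t < Y p ω} * μ Φ' := by
    intro p hp1 hpn t
    set 𝔏 : Finset ℕ := Finset.Icc 1 (p - r) with h𝔏
    set ℜ : Finset ℕ := Finset.Icc (p + r) n with hℜ
    set cL : Ω → ℕ := fun ω => ((𝔏.filter fun j => ℓ < χ (T^[j - 1] ω)).card) with hcL
    set cR : Ω → ℕ := fun ω => ((ℜ.filter fun j => ℓ < χ (T^[j - 1] ω)).card) with hcR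
    set E : Set Ω := {ω | t < Y p ω} with hE
    set Lev : ℕ → Set Ω := fun a => cL ⁻¹' {m : ℕ | m = a} with hLev
    set Rev : ℕ → Set Ω := fun a =>
      cR ⁻¹' {m : ℕ | (b n : ℝ) - 2 * r + 1 < (a : ℝ) + (m : ℝ)} with hRev
    set Ψp : Set Ω := {ω | (b n : ℝ) - 2 * r + 1 < (cL ω : ℝ) + (cR ω : ℝ)} with hΨp
    -- counting facts
    have h𝔏sub : 𝔏 ⊆ Finset.Icc 1 n := by
      intro j hj; simp only [h𝔏, Finset.mem_Icc] at hj ⊢; omega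
    have hℜsub : ℜ ⊆ Finset.Icc 1 n := by
      intro j hj; simp only [hℜ, Finset.mem_Icc] at hj ⊢; omega
    have hdisjLR : Disjoint 𝔏 ℜ := by
      rw [Finset.disjoint_left]
      intro j hj hj'
      simp only [h𝔏, hℜ, Finset.mem_Icc] at hj hj'
      omega
    have hΨΨp : Ψ ⊆ Ψp := by
      intro ω hω
      simp only [hΨdef, Set.mem_setOf_eq] at hω
      simp only [hΨp, Set.mem_setOf_eq]
      -- cF ≤ cL + cR + (2r - 1)
      have hsub : (Finset.Icc 1 n).filter (fun j => ℓ < χ (T^[j - 1] ω))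
          ⊆ ((𝔏.filter fun j => ℓ < χ (T^[j - 1] ω)) ∪
             (ℜ.filter fun j => ℓ < χ (T^[j - 1] ω))) ∪
            (Finset.Icc 1 n \ (𝔏 ∪ ℜ)) := by
        intro j hj
        simp only [Finset.mem_filter] at hj
        by_cases h1 : j ∈ 𝔏
        · exact Finset.mem_union_left _ (Finset.mem_union_left _
            (Finset.mem_filter.mpr ⟨h1, hj.2⟩))
        by_cases h2 : j ∈ ℜ
        · exact Finset.mem_union_left _ (Finset.mem_union_right _
            (Finset.mem_filter.mpr ⟨h2, hj.2⟩))
        · exact Finset.mem_union_right _ (Finset.mem_sdiff.mpr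
            ⟨hj.1, by simp [h1, h2]⟩)
      have hWcard : (Finset.Icc 1 n \ (𝔏 ∪ ℜ)).card ≤ 2 * r - 1 := by
        have hW : (Finset.Icc 1 n \ (𝔏 ∪ ℜ)) ⊆ Finset.Ioo (p - r) (p + r) := by
          intro j hj
          simp only [Finset.mem_sdiff, Finset.mem_union, Finset.mem_Icc, not_or,
            h𝔏, hℜ, Finset.mem_Ioo] at hj ⊢
          omega
        calc (Finset.Icc 1 n \ (𝔏 ∪ ℜ)).card ≤ (Finset.Ioo (p - r) (p + r)).card :=
              Finset.card_le_card hW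
        _ = (p + r) - (p - r) - 1 := Nat.card_Ioo _ _
        _ ≤ 2 * r - 1 := by omega
      have hcF : ((Finset.Icc 1 n).filter (fun j => ℓ < χ (T^[j - 1] ω))).card
          ≤ cL ω + cR ω + (2 * r - 1) := by
        calc ((Finset.Icc 1 n).filter (fun j => ℓ < χ (T^[j - 1] ω))).card
            ≤ (((𝔏.filter fun j => ℓ < χ (T^[j - 1] ω)) ∪
               (ℜ.filter fun j => ℓ < χ (T^[j - 1] ω))) ∪
              (Finset.Icc 1 n \ (𝔏 ∪ ℜ))).card := Finset.card_le_card hsub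
        _ ≤ ((𝔏.filter fun j => ℓ < χ (T^[j - 1] ω)) ∪
               (ℜ.filter fun j => ℓ < χ (T^[j - 1] ω))).card
              + (Finset.Icc 1 n \ (𝔏 ∪ ℜ)).card := Finset.card_union_le _ _
        _ ≤ ((𝔏.filter fun j => ℓ < χ (T^[j - 1] ω)).card
              + (ℜ.filter fun j => ℓ < χ (T^[j - 1] ω)).card)
              + (Finset.Icc 1 n \ (𝔏 ∪ ℜ)).card :=
              Nat.add_le_add_right (Finset.card_union_le _ _) _
        _ ≤ cL ω + cR ω + (2 * r - 1) := by
              rw [hcL, hcR]; exact Nat.add_le_add_left hWcard _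
      have hnat : b n + 2 ≤ cL ω + cR ω + 2 * r := by omega
      have hreal : ((b n : ℝ)) + 2 ≤ (cL ω : ℝ) + (cR ω : ℝ) + 2 * (r : ℝ) := by
        exact_mod_cast hnat
      linarith
    have hΨpΦ' : Ψp ⊆ Φ' := by
      intro ω hω
      simp only [hΨp, Set.mem_setOf_eq] at hω
      simp only [hΦ'def, Set.mem_setOf_eq]
      have hsum : cL ω + cR ω
          ≤ ((Finset.Icc 1 n).filter fun j => ℓ < χ (T^[j - 1] ω)).card := by
        rw [hcL, hcR, ← Finset.card_union_of_disjoint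
          (Finset.disjoint_filter_filter hdisjLR)]
        apply Finset.card_le_card
        apply Finset.union_subset
        · exact Finset.filter_subset_filter _ h𝔏sub
        · exact Finset.filter_subset_filter _ hℜsub
      have hsumr : ((cL ω : ℝ)) + (cR ω : ℝ)
          ≤ (((Finset.Icc 1 n).filter fun j => ℓ < χ (T^[j - 1] ω)).card : ℝ) := by
        exact_mod_cast hsum
      linarith
    -- measurability (ambient)
    have hcLm : Measurable cL := measurable_cnt T χ 𝔏 ℓ (fun j _ => hXm (j - 1))
    have hcRm : Measurable cR := measurable_cnt T χ ℜ ℓ (fun j _ => hXm (j - 1))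
    have hLevm : ∀ a, MeasurableSet (Lev a) := fun a =>
      hcLm (MeasurableSet.of_discrete (s := {m : ℕ | m = a}))
    have hRevm : ∀ a, MeasurableSet (Rev a) := fun a =>
      hcRm (MeasurableSet.of_discrete (s := {m : ℕ | (b n : ℝ) - 2 * r + 1 < (a : ℝ) + (m : ℝ)}))
    have hEm : MeasurableSet E := measurableSet_lt measurable_const (hYm p)
    -- decomposition over the value of cL
    have hcLbd : ∀ ω, cL ω ≤ n := by
      intro ω
      calc cL ω ≤ 𝔏.card := Finset.card_filter_le _ _
      _ = (p - r) + 1 - 1 := by rw [h𝔏, Nat.card_Icc]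
      _ ≤ n := by omega
    have hsplit : ∀ D : Set Ω, D ∩ Ψp
        = ⋃ a ∈ Finset.range (n + 1), (Lev a ∩ (D ∩ Rev a)) := by
      intro D
      ext ω
      simp only [Set.mem_inter_iff, Set.mem_iUnion, Finset.mem_range, hLev, hRev, hΨp,
        Set.mem_preimage, Set.mem_setOf_eq]
      constructor
      · rintro ⟨hD, hP⟩
        exact ⟨cL ω, by have := hcLbd ω; omega, rfl, hD, hP⟩
      · rintro ⟨a, _, ha, hD, hR⟩
        exact ⟨hD, by rw [ha]; exact hR⟩
    have hdisj : ∀ D : Set Ω, (↑(Finset.range (n + 1)) : Set ℕ).PairwiseDisjoint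
        (fun a => Lev a ∩ (D ∩ Rev a)) := by
      intro D a _ a' _ hne
      apply Set.disjoint_left.mpr
      rintro ω ⟨h1, _⟩ ⟨h2, _⟩
      simp only [hLev, Set.mem_preimage, Set.mem_setOf_eq] at h1 h2
      exact hne (h1 ▸ h2 ▸ rfl)
    have hmeasum : ∀ D : Set Ω, MeasurableSet D →
        μ (D ∩ Ψp) = ∑ a ∈ Finset.range (n + 1), μ (Lev a ∩ (D ∩ Rev a)) := by
      intro D hD
      rw [hsplit D]
      exact measure_biUnion_finset (hdisj D)
        (fun a _ => (hLevm a).inter (hD.inter (hRevm a)))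
    -- mixing bounds
    have Hup1 : ∀ a : ℕ, (μ (Lev a ∩ (E ∩ Rev a))).toReal
        ≤ (1 + ψ) * ((μ (Lev a)).toReal * (μ (E ∩ Rev a)).toReal) := by
      intro a
      by_cases hpr : r + 1 ≤ p
      · -- genuine mixing with gap r
        have hkr : p - r + r = p := by omega
        have hB : MeasurableSet[sigmaIcc T χ 1 (p - r)] (Lev a) :=
          measurable_cnt T χ 𝔏 ℓ (fun j hj =>
            measurable_sigmaIcc T χ (by
              simp only [h𝔏, Finset.mem_Icc] at hj
              exact Set.mem_Icc.mpr ⟨hj.1, hj.2⟩))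
            (MeasurableSet.of_discrete (s := {m : ℕ | m = a}))
        have hC : MeasurableSet[sigmaIci T χ ((p - r) + r)] (E ∩ Rev a) := by
          rw [hkr]
          apply MeasurableSet.inter
          · exact measurableSet_lt measurable_const
              (hYsub p _ (measurable_sigmaIci T χ (Set.mem_Ici.mpr le_rfl)))
          · exact measurable_cnt T χ ℜ ℓ (fun j hj =>
              measurable_sigmaIci T χ (by
                simp only [hℜ, Finset.mem_Icc] at hj
                exact Set.mem_Ici.mpr (by omega)))
              (MeasurableSet.of_discrete (s := {m : ℕ | (b n : ℝ) - 2 * r + 1 < (a : ℝ) + (m : ℝ)}))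
        exact (psi_bound μ T χ r hrψ (by omega : 1 ≤ p - r) hB hC).1
      · -- trivial case: 𝔏 = ∅
        have h𝔏e : 𝔏 = ∅ := by rw [h𝔏]; exact Finset.Icc_eq_empty (by omega)
        have hcL0 : ∀ ω, cL ω = 0 := by intro ω; rw [hcL]; simp [h𝔏e]
        rcases Nat.eq_zero_or_pos a with rfl | hapos
        · have hLuniv : Lev 0 = Set.univ := by
            rw [hLev]; ext ω; simp [hcL0 ω]
          rw [hLuniv, Set.univ_inter]
          simp only [measure_univ, ENNReal.toReal_one, one_mul]
          nlinarith [ENNReal.toReal_nonneg (a := μ (E ∩ Rev 0))]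
        · have hLe : Lev a = ∅ := by
            rw [hLev]; ext ω; simp [hcL0 ω]; omega
          rw [hLe, Set.empty_inter]
          simp only [measure_empty, ENNReal.toReal_zero, zero_mul, mul_zero]
          positivity
    have Hup2 : ∀ a : ℕ, (μ (E ∩ Rev a)).toReal
        ≤ (1 + ψ) * ((μ E).toReal * (μ (Rev a)).toReal) := by
      intro a
      have hB : MeasurableSet[sigmaIcc T χ 1 p] E :=
        measurableSet_lt measurable_const
          (hYsub p _ (measurable_sigmaIcc T χ (Set.mem_Icc.mpr ⟨hp1, le_rfl⟩)))
      have hC : MeasurableSet[sigmaIci T χ (p + r)] (Rev a) :=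
        measurable_cnt T χ ℜ ℓ (fun j hj =>
          measurable_sigmaIci T χ (by
            simp only [hℜ, Finset.mem_Icc] at hj
            exact Set.mem_Ici.mpr hj.1))
          (MeasurableSet.of_discrete (s := {m : ℕ | (b n : ℝ) - 2 * r + 1 < (a : ℝ) + (m : ℝ)}))
      exact (psi_bound μ T χ r hrψ hp1 hB hC).1
    have Hlo : ∀ a : ℕ, (1 - ψ) * ((μ (Lev a)).toReal * (μ (Rev a)).toReal)
        ≤ (μ (Lev a ∩ Rev a)).toReal := by
      intro a
      by_cases hpr : r + 1 ≤ p
      · have hkr : p - r + r = p := by omega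
        have hB : MeasurableSet[sigmaIcc T χ 1 (p - r)] (Lev a) :=
          measurable_cnt T χ 𝔏 ℓ (fun j hj =>
            measurable_sigmaIcc T χ (by
              simp only [h𝔏, Finset.mem_Icc] at hj
              exact Set.mem_Icc.mpr ⟨hj.1, hj.2⟩))
            (MeasurableSet.of_discrete (s := {m : ℕ | m = a}))
        have hC : MeasurableSet[sigmaIci T χ ((p - r) + r)] (Rev a) := by
          rw [hkr]
          exact measurable_cnt T χ ℜ ℓ (fun j hj =>
            measurable_sigmaIci T χ (by
              simp only [hℜ, Finset.mem_Icc] at hj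
              exact Set.mem_Ici.mpr (by omega)))
            (MeasurableSet.of_discrete (s := {m : ℕ | (b n : ℝ) - 2 * r + 1 < (a : ℝ) + (m : ℝ)}))
        exact (psi_bound μ T χ r hrψ (by omega : 1 ≤ p - r) hB hC).2
      · have h𝔏e : 𝔏 = ∅ := by rw [h𝔏]; exact Finset.Icc_eq_empty (by omega)
        have hcL0 : ∀ ω, cL ω = 0 := by intro ω; rw [hcL]; simp [h𝔏e]
        rcases Nat.eq_zero_or_pos a with rfl | hapos
        · have hLuniv : Lev 0 = Set.univ := by
            rw [hLev]; ext ω; simp [hcL0 ω]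
          rw [hLuniv, Set.univ_inter]
          simp only [measure_univ, ENNReal.toReal_one, one_mul]
          nlinarith [ENNReal.toReal_nonneg (a := μ (Rev 0))]
        · have hLe : Lev a = ∅ := by
            rw [hLev]; ext ω; simp [hcL0 ω]; omega
          rw [hLe, Set.empty_inter]
          simp only [measure_empty, ENNReal.toReal_zero, zero_mul, mul_zero]
          simp
    have Hcomb : ∀ a : ℕ, (μ (Lev a ∩ (E ∩ Rev a))).toReal
        ≤ Creal * (μ E).toReal * (μ (Lev a ∩ Rev a)).toReal := by
      intro a
      have h1 := Hup1 a
      have h2 := Hup2 a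
      have h3 := Hlo a
      have hla : (0:ℝ) ≤ (μ (Lev a)).toReal := ENNReal.toReal_nonneg
      have hra : (0:ℝ) ≤ (μ (Rev a)).toReal := ENNReal.toReal_nonneg
      have he : (0:ℝ) ≤ (μ E).toReal := ENNReal.toReal_nonneg
      have her : (0:ℝ) ≤ (μ (E ∩ Rev a)).toReal := ENNReal.toReal_nonneg
      rw [hCrealdef, div_mul_eq_mul_div, div_mul_eq_mul_div, le_div_iff₀ h1ψ]
      have e1 : (μ (Lev a ∩ (E ∩ Rev a))).toReal * (1 - ψ)
          ≤ ((1 + ψ) * ((μ (Lev a)).toReal * (μ (E ∩ Rev a)).toReal)) * (1 - ψ) :=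
        mul_le_mul_of_nonneg_right h1 h1ψ.le
      have e2 : ((1 + ψ) * (1 - ψ) * (μ (Lev a)).toReal) * (μ (E ∩ Rev a)).toReal
          ≤ ((1 + ψ) * (1 - ψ) * (μ (Lev a)).toReal)
            * ((1 + ψ) * ((μ E).toReal * (μ (Rev a)).toReal)) :=
        mul_le_mul_of_nonneg_left h2
          (by positivity)
      have e3 : ((1 + ψ) ^ 2 * (μ E).toReal)
            * ((1 - ψ) * ((μ (Lev a)).toReal * (μ (Rev a)).toReal))
          ≤ ((1 + ψ) ^ 2 * (μ E).toReal) * (μ (Lev a ∩ Rev a)).toReal :=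
        mul_le_mul_of_nonneg_left h3 (by positivity)
      nlinarith [e1, e2, e3]
    -- sum over a : real estimate
    have hreal : (μ (E ∩ Ψp)).toReal ≤ Creal * (μ E).toReal * (μ Φ').toReal := by
      have hne : ∀ a ∈ Finset.range (n + 1), μ (Lev a ∩ (E ∩ Rev a)) ≠ ⊤ :=
        fun a _ => measure_ne_top _ _
      have hne2 : ∀ a ∈ Finset.range (n + 1), μ (Lev a ∩ (Set.univ ∩ Rev a)) ≠ ⊤ :=
        fun a _ => measure_ne_top _ _
      have hs1 : (μ (E ∩ Ψp)).toReal
          = ∑ a ∈ Finset.range (n + 1), (μ (Lev a ∩ (E ∩ Rev a))).toReal := by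
        rw [hmeasum E hEm, ENNReal.toReal_sum hne]
      have hs2 : (μ Ψp).toReal
          = ∑ a ∈ Finset.range (n + 1), (μ (Lev a ∩ (Set.univ ∩ Rev a))).toReal := by
        rw [← Set.univ_inter Ψp, hmeasum Set.univ MeasurableSet.univ,
          ENNReal.toReal_sum hne2]
      calc (μ (E ∩ Ψp)).toReal
          = ∑ a ∈ Finset.range (n + 1), (μ (Lev a ∩ (E ∩ Rev a))).toReal := hs1
      _ ≤ ∑ a ∈ Finset.range (n + 1),
            Creal * (μ E).toReal * (μ (Lev a ∩ Rev a)).toReal :=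
            Finset.sum_le_sum (fun a _ => Hcomb a)
      _ = Creal * (μ E).toReal
            * ∑ a ∈ Finset.range (n + 1), (μ (Lev a ∩ Rev a)).toReal := by
            rw [Finset.mul_sum]
      _ = Creal * (μ E).toReal * (μ Ψp).toReal := by
            rw [hs2]
            congr 1
            apply Finset.sum_congr rfl
            intro a _
            rw [Set.univ_inter]
      _ ≤ Creal * (μ E).toReal * (μ Φ').toReal := by
            apply mul_le_mul_of_nonneg_left
              (ENNReal.toReal_mono (measure_ne_top _ _) (measure_mono hΨpΦ'))
              (mul_nonneg hC0 ENNReal.toReal_nonneg)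
    calc μ ({ω | t < Y p ω} ∩ Ψ) ≤ μ (E ∩ Ψp) :=
          measure_mono (Set.inter_subset_inter_right _ hΨΨp)
    _ = ENNReal.ofReal ((μ (E ∩ Ψp)).toReal) :=
          (ENNReal.ofReal_toReal (measure_ne_top _ _)).symm
    _ ≤ ENNReal.ofReal (Creal * (μ E).toReal * (μ Φ').toReal) :=
          ENNReal.ofReal_le_ofReal hreal
    _ = ENNReal.ofReal Creal * μ {ω | t < Y p ω} * μ Φ' := by
          rw [ENNReal.ofReal_mul (mul_nonneg hC0 ENNReal.toReal_nonneg),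
            ENNReal.ofReal_mul hC0, ENNReal.ofReal_toReal (measure_ne_top _ _),
            ENNReal.ofReal_toReal (measure_ne_top _ _)]
  -- layer cake representation
  have layer : ∀ (p : ℕ) (A : Set Ω), MeasurableSet A →
      ∫⁻ ω in A, ENNReal.ofReal (Y p ω) ∂μ
        = ∫⁻ t in Set.Ioi (0 : ℝ), μ ({ω | t < Y p ω} ∩ A) := by
    intro p A hA
    rw [lintegral_eq_lintegral_meas_lt (μ.restrict A)
      (Filter.Eventually.of_forall (hY0 p)) (hYm p).aemeasurable]
    refine setLIntegral_congr_fun measurableSet_Ioi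
      (fun t _ => ?_)
    rw [Measure.restrict_apply (measurableSet_lt measurable_const (hYm p))]
  have keyint : ∀ p : ℕ, 1 ≤ p → p ≤ n →
      ∫⁻ ω in Ψ, ENNReal.ofReal (Y p ω) ∂μ
        ≤ ENNReal.ofReal Creal * (∫⁻ ω, ENNReal.ofReal (Y p ω) ∂μ) * μ Φ' := by
    intro p hp1 hpn
    rw [layer p Ψ hΨm]
    have hmono : ∫⁻ t in Set.Ioi (0:ℝ), μ ({ω | t < Y p ω} ∩ Ψ)
        ≤ ∫⁻ t in Set.Ioi (0:ℝ),
            ENNReal.ofReal Creal * μ {ω | t < Y p ω} * μ Φ' :=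
      lintegral_mono (fun t => key p hp1 hpn t)
    refine hmono.trans (le_of_eq ?_)
    rw [lintegral_mul_const' _ _ (measure_ne_top μ Φ'),
      lintegral_const_mul' _ _ ENNReal.ofReal_ne_top]
    congr 2
    rw [← lintegral_eq_lintegral_meas_lt μ
      (Filter.Eventually.of_forall (hY0 p)) (hYm p).aemeasurable]
  -- assemble
  have hGsum : ∀ (ν : Measure Ω),
      ∫⁻ ω, ENNReal.ofReal (truncSumN T χ n M ω) ∂ν
        = ∑ j ∈ Finset.range n, ∫⁻ ω, ENNReal.ofReal (Y (j + 1) ω) ∂ν := by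
    intro ν
    have hpt : ∀ ω, ENNReal.ofReal (truncSumN T χ n M ω)
        = ∑ j ∈ Finset.range n, ENNReal.ofReal (Y (j + 1) ω) := by
      intro ω
      rw [truncSumN, ENNReal.ofReal_sum_of_nonneg]
      · rfl
      · intro j _
        split
        · exact hχ0 _
        · exact le_rfl
    rw [lintegral_congr hpt]
    exact lintegral_finset_sum _
      (fun j _ => ENNReal.measurable_ofReal.comp (hYm (j + 1)))
  have hG0 : ∀ ω, 0 ≤ truncSumN T χ n M ω := by
    intro ω
    apply Finset.sum_nonneg
    intro j _
    split
    · exact hχ0 _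
    · exact le_rfl
  have hGm : Measurable (truncSumN T χ n M) := by
    apply Finset.measurable_sum
    intro j _
    exact Measurable.ite (measurableSet_le (hXm j) measurable_const)
      (hXm j) measurable_const
  have hGbd : ∀ ω, truncSumN T χ n M ω ≤ (n : ℝ) * max M 0 := by
    intro ω
    calc truncSumN T χ n M ω ≤ ∑ _j ∈ Finset.range n, max M 0 := by
          apply Finset.sum_le_sum
          intro j _
          split
          · exact le_max_of_le_left (by assumption)
          · exact le_max_right _ _
    _ = (n : ℝ) * max M 0 := by
          rw [Finset.sum_const, Finset.card_range, nsmul_eq_mul]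
  have hfin : ∫⁻ ω, ENNReal.ofReal (truncSumN T χ n M ω) ∂μ ≠ ⊤ := by
    apply ne_top_of_le_ne_top (b := ENNReal.ofReal ((n : ℝ) * max M 0))
    · exact ENNReal.ofReal_ne_top
    · calc ∫⁻ ω, ENNReal.ofReal (truncSumN T χ n M ω) ∂μ
          ≤ ∫⁻ _ω, ENNReal.ofReal ((n : ℝ) * max M 0) ∂μ :=
            lintegral_mono (fun ω => ENNReal.ofReal_le_ofReal (hGbd ω))
      _ = ENNReal.ofReal ((n : ℝ) * max M 0) := by simp [lintegral_const]
  have main : ∫⁻ ω in Φ, ENNReal.ofReal (truncSumN T χ n M ω) ∂μ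
      ≤ ENNReal.ofReal Creal * (∫⁻ ω, ENNReal.ofReal (truncSumN T χ n M ω) ∂μ)
        * μ Φ' := by
    calc ∫⁻ ω in Φ, ENNReal.ofReal (truncSumN T χ n M ω) ∂μ
        ≤ ∫⁻ ω in Ψ, ENNReal.ofReal (truncSumN T χ n M ω) ∂μ :=
          lintegral_mono' (Measure.restrict_mono hΦΨ le_rfl) (le_refl _)
    _ = ∑ j ∈ Finset.range n, ∫⁻ ω in Ψ, ENNReal.ofReal (Y (j + 1) ω) ∂μ :=
          hGsum (μ.restrict Ψ)
    _ ≤ ∑ j ∈ Finset.range n,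
          ENNReal.ofReal Creal * (∫⁻ ω, ENNReal.ofReal (Y (j + 1) ω) ∂μ) * μ Φ' :=
          Finset.sum_le_sum (fun j hj => keyint (j + 1)
            (Nat.succ_le_succ (Nat.zero_le j))
            (Finset.mem_range.mp hj))
    _ = ENNReal.ofReal Creal
          * (∑ j ∈ Finset.range n, ∫⁻ ω, ENNReal.ofReal (Y (j + 1) ω) ∂μ) * μ Φ' := by
          rw [← Finset.sum_mul, ← Finset.mul_sum]
    _ = ENNReal.ofReal Creal * (∫⁻ ω, ENNReal.ofReal (truncSumN T χ n M ω) ∂μ)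
          * μ Φ' := by rw [← hGsum μ]
  have hconv : ∀ ν : Measure Ω, ∫ ω, truncSumN T χ n M ω ∂ν
      = (∫⁻ ω, ENNReal.ofReal (truncSumN T χ n M ω) ∂ν).toReal := fun ν =>
    integral_eq_lintegral_of_nonneg_ae (Filter.Eventually.of_forall hG0)
      hGm.aestronglyMeasurable
  have hRHSfin : ENNReal.ofReal Creal
      * (∫⁻ ω, ENNReal.ofReal (truncSumN T χ n M ω) ∂μ) * μ Φ' ≠ ⊤ :=
    ENNReal.mul_ne_top (ENNReal.mul_ne_top ENNReal.ofReal_ne_top hfin)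
      (measure_ne_top μ _)
  show ∫ ω in Φ, truncSumN T χ n M ω ∂μ
      ≤ Creal * (∫ ω, truncSumN T χ n M ω ∂μ) * (μ Φ').toReal
  rw [hconv (μ.restrict Φ), hconv μ]
  calc (∫⁻ ω in Φ, ENNReal.ofReal (truncSumN T χ n M ω) ∂μ).toReal
      ≤ (ENNReal.ofReal Creal
          * (∫⁻ ω, ENNReal.ofReal (truncSumN T χ n M ω) ∂μ) * μ Φ').toReal :=
        ENNReal.toReal_mono hRHSfin main
  _ = Creal * (∫⁻ ω, ENNReal.ofReal (truncSumN T χ n M ω) ∂μ).toReal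
        * (μ Φ').toReal := by
        rw [ENNReal.toReal_mul, ENNReal.toReal_mul, ENNReal.toReal_ofReal hC0]
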